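/- The embedding E of the category of string graphs into the category of pattern graphs, regarding each string graph as a pattern graph with no !-vertices, is full and coreflective: it is left adjoint to the forgetful functor U sending a pattern graph to the string graph obtained by deleting all !-vertices and all edges incident to them. -/

import Mathlib

/-- Vertex types: node-vertices, wire-vertices and `!`-vertices. -/
inductive VTy : Type
  | node | wire | bang
  deriving DecidableEq

/-- A directed graph whose vertices are typed by `VTy`. -/
structure TGraph (V E : Type) where
  s : E → V
  t : E → V
  ty : V → VTy

namespace TGraph

variable {V E : Type}

/-- No edge has both a node-vertex source and a node-vertex target. -/
def NoNodeNode (G : TGraph V E) : Prop :=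
  ∀ e, ¬ (G.ty (G.s e) = .node ∧ G.ty (G.t e) = .node)

/-- A `G₂`-typed graph: only node- and wire-vertices, no node-node edges. -/
def IsG2 (G : TGraph V E) : Prop :=
  G.NoNodeNode ∧ ∀ v, G.ty v ≠ .bang

/-- A `G₃`-typed graph: no node-node edges, and every edge into a `!`-vertex
comes from a `!`-vertex. -/
def IsG3 (G : TGraph V E) : Prop :=
  G.NoNodeNode ∧ ∀ e, G.ty (G.t e) = .bang → G.ty (G.s e) = .bang

/-- An input: a wire-vertex all of whose in-edges have `!`-vertex sources.
In a `G₂`-typed graph this says exactly: a wire-vertex with no in-edges. -/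
def IsInput (G : TGraph V E) (v : V) : Prop :=
  G.ty v = .wire ∧ ∀ e, G.t e = v → G.ty (G.s e) = .bang

/-- An output: a wire-vertex with no out-edges. -/
def IsOutput (G : TGraph V E) (v : V) : Prop :=
  G.ty v = .wire ∧ ∀ e, G.s e ≠ v

/-- A string graph: a `G₂`-typed graph where every wire-vertex has at most one
in-edge and at most one out-edge. -/
def IsStringGraph (G : TGraph V E) : Prop :=
  G.IsG2 ∧ ∀ v, G.ty v = .wire →
    (∀ e₁ e₂, G.t e₁ = v → G.t e₂ = v → e₁ = e₂) ∧
    (∀ e₁ e₂, G.s e₁ = v → G.s e₂ = v → e₁ = e₂)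

/-- The set of successors of a vertex. -/
def bsucc (G : TGraph V E) (b : V) : Set V := {v | ∃ e, G.s e = b ∧ G.t e = v}

/-- The set of predecessors of a vertex. -/
def bpred (G : TGraph V E) (b : V) : Set V := {v | ∃ e, G.s e = v ∧ G.t e = b}

/-- The full subgraph on a set of vertices, as a standalone graph. -/
def restrict (G : TGraph V E) (S : Set V) :
    TGraph {v : V // v ∈ S} {e : E // G.s e ∈ S ∧ G.t e ∈ S} where
  s e := ⟨G.s e.1, e.2.1⟩
  t e := ⟨G.t e.1, e.2.2⟩
  ty v := G.ty v.1

/-- A subgraph of a graph. -/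
structure Sub (G : TGraph V E) where
  verts : Set V
  edges : Set E
  s_mem : ∀ e ∈ edges, G.s e ∈ verts
  t_mem : ∀ e ∈ edges, G.t e ∈ verts

namespace Sub

variable {G : TGraph V E}

/-- The whole graph as a subgraph of itself. -/
def top (G : TGraph V E) : Sub G :=
  ⟨Set.univ, Set.univ, fun _ _ => trivial, fun _ _ => trivial⟩

def inter (A B : Sub G) : Sub G :=
  ⟨A.verts ∩ B.verts, A.edges ∩ B.edges,
    fun e he => ⟨A.s_mem e he.1, B.s_mem e he.2⟩,
    fun e he => ⟨A.t_mem e he.1, B.t_mem e he.2⟩⟩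

def union (A B : Sub G) : Sub G :=
  ⟨A.verts ∪ B.verts, A.edges ∪ B.edges,
    fun e he => he.elim (fun h => Or.inl (A.s_mem e h)) (fun h => Or.inr (B.s_mem e h)),
    fun e he => he.elim (fun h => Or.inl (A.t_mem e h)) (fun h => Or.inr (B.t_mem e h))⟩

/-- `H∖A` : the largest subgraph of `H` that is disjoint from `A`
(the full subgraph of `H` on the vertices of `H` not in `A`). -/
def minus (H A : Sub G) : Sub G :=
  ⟨H.verts \ A.verts, {e | e ∈ H.edges ∧ G.s e ∉ A.verts ∧ G.t e ∉ A.verts},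
    fun e he => ⟨H.s_mem e he.1, he.2.1⟩,
    fun e he => ⟨H.t_mem e he.1, he.2.2⟩⟩

/-- An input of a subgraph: a wire-vertex of the subgraph all of whose in-edges
(inside the subgraph) have `!`-vertex sources. -/
def IsInput (A : Sub G) (v : V) : Prop :=
  v ∈ A.verts ∧ G.ty v = .wire ∧ ∀ e ∈ A.edges, G.t e = v → G.ty (G.s e) = .bang

/-- An output of a subgraph: a wire-vertex of the subgraph with no out-edges
inside the subgraph. -/
def IsOutput (A : Sub G) (v : V) : Prop :=
  v ∈ A.verts ∧ G.ty v = .wire ∧ ∀ e ∈ A.edges, G.s e ≠ v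

/-- `A` is open in `H`: `In(H∖A) ⊆ In(H)` and `Out(H∖A) ⊆ Out(H)`. -/
def IsOpenIn (A H : Sub G) : Prop :=
  (∀ v, (H.minus A).IsInput v → H.IsInput v) ∧
  (∀ v, (H.minus A).IsOutput v → H.IsOutput v)

/-- `A` is an open subgraph of `G`. -/
def IsOpen (A : Sub G) : Prop := A.IsOpenIn (top G)

end Sub

/-- The full subgraph on a vertex set, as a subgraph. -/
def fullSub (G : TGraph V E) (S : Set V) : Sub G :=
  ⟨S, {e | G.s e ∈ S ∧ G.t e ∈ S}, fun _ he => he.1, fun _ he => he.2⟩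

/-- `B(b)` : the `!`-box of `b`, i.e. the full subgraph on the successors of `b`. -/
def bbox (G : TGraph V E) (b : V) : Sub G := G.fullSub (G.bsucc b)

/-- Edges of `Σ(G)`, the full subgraph on node- and wire-vertices. -/
def sigmaEdges (G : TGraph V E) : Set E :=
  {e | G.ty (G.s e) ≠ .bang ∧ G.ty (G.t e) ≠ .bang}

/-- Edges of `β(G)`, the full subgraph on `!`-vertices. -/
def betaEdges (G : TGraph V E) : Set E :=
  {e | G.ty (G.s e) = .bang ∧ G.ty (G.t e) = .bang}

/-- `Σ(G)` is a string graph. -/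
def SigmaIsStringGraph (G : TGraph V E) : Prop :=
  G.NoNodeNode ∧ ∀ v, G.ty v = .wire →
    (∀ e₁ e₂, e₁ ∈ G.sigmaEdges → e₂ ∈ G.sigmaEdges → G.t e₁ = v → G.t e₂ = v → e₁ = e₂) ∧
    (∀ e₁ e₂, e₁ ∈ G.sigmaEdges → e₂ ∈ G.sigmaEdges → G.s e₁ = v → G.s e₂ = v → e₁ = e₂)

/-- `β(G)` is posetal: simple and, as a relation on `!`-vertices, a partial order. -/
def BetaPosetal (G : TGraph V E) : Prop :=
  (∀ e₁ e₂, e₁ ∈ G.betaEdges → e₂ ∈ G.betaEdges →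
    G.s e₁ = G.s e₂ → G.t e₁ = G.t e₂ → e₁ = e₂) ∧
  (∀ b, G.ty b = .bang → b ∈ G.bsucc b) ∧
  (∀ b b', G.ty b = .bang → G.ty b' = .bang →
    b' ∈ G.bsucc b → b ∈ G.bsucc b' → b = b') ∧
  (∀ a b c, G.ty a = .bang → G.ty b = .bang → G.ty c = .bang →
    b ∈ G.bsucc a → c ∈ G.bsucc b → c ∈ G.bsucc a)

/-- A pattern graph. -/
def IsPattern (G : TGraph V E) : Prop :=
  G.IsG3 ∧ G.SigmaIsStringGraph ∧ G.BetaPosetal ∧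
  (∀ b, G.ty b = .bang → (G.bbox b).IsOpen) ∧
  (∀ b b', G.ty b = .bang → G.ty b' = .bang → b' ∈ G.bsucc b →
    G.bsucc b' ⊆ G.bsucc b)

end TGraph

namespace TGraph

variable {V E V' E' V'' E'' : Type}

/-- A morphism of typed graphs. -/
structure GHom (G : TGraph V E) (H : TGraph V' E') where
  fv : V → V'
  fe : E → E'
  map_s : ∀ e, H.s (fe e) = fv (G.s e)
  map_t : ∀ e, H.t (fe e) = fv (G.t e)
  map_ty : ∀ v, H.ty (fv v) = G.ty v

namespace GHom

variable {G : TGraph V E} {H : TGraph V' E'} {K : TGraph V'' E''}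

protected def id (G : TGraph V E) : GHom G G :=
  ⟨fun v => v, fun e => e, fun _ => rfl, fun _ => rfl, fun _ => rfl⟩

def comp (g : GHom H K) (f : GHom G H) : GHom G K where
  fv v := g.fv (f.fv v)
  fe e := g.fe (f.fe e)
  map_s e := by rw [g.map_s, f.map_s]
  map_t e := by rw [g.map_t, f.map_t]
  map_ty v := by rw [g.map_ty, f.map_ty]

theorem mem_bsucc (f : GHom G H) {b v : V} (h : v ∈ G.bsucc b) :
    f.fv v ∈ H.bsucc (f.fv b) := by
  obtain ⟨e, hs, ht⟩ := h
  exact ⟨f.fe e, by rw [f.map_s, hs], by rw [f.map_t, ht]⟩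

theorem mem_bpred (f : GHom G H) {b v : V} (h : v ∈ G.bpred b) :
    f.fv v ∈ H.bpred (f.fv b) := by
  obtain ⟨e, hs, ht⟩ := h
  exact ⟨f.fe e, by rw [f.map_s, hs], by rw [f.map_t, ht]⟩

end GHom

/-- An isomorphism of typed graphs. -/
structure GIso (G : TGraph V E) (H : TGraph V' E') where
  toHom : GHom G H
  fv_bij : Function.Bijective toHom.fv
  fe_bij : Function.Bijective toHom.fe

end TGraph

open CategoryTheory

/-- Every string graph is a pattern graph (with no `!`-vertices). -/
theorem TGraph.isPattern_of_isStringGraph {V E : Type} {G : TGraph V E}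
    (h : G.IsStringGraph) : G.IsPattern := by
  obtain ⟨⟨hnn, hnb⟩, hw⟩ := h
  refine ⟨⟨hnn, fun e he => absurd he (hnb _)⟩,
    ⟨hnn, fun v hv => ⟨fun e₁ e₂ _ _ h1 h2 => (hw v hv).1 e₁ e₂ h1 h2,
      fun e₁ e₂ _ _ h1 h2 => (hw v hv).2 e₁ e₂ h1 h2⟩⟩,
    ⟨fun e₁ e₂ h1 _ _ _ => absurd h1.1 (hnb _),
      fun b hb => absurd hb (hnb b),
      fun b b' hb _ _ _ => absurd hb (hnb b),
      fun a b c ha _ _ _ _ => absurd ha (hnb a)⟩,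
    fun b hb => absurd hb (hnb b),
    fun b b' hb _ _ => absurd hb (hnb b)⟩

/-- Deleting the `!`-vertices of a pattern graph yields a string graph. -/
theorem TGraph.isStringGraph_restrictNonBang {V E : Type} {G : TGraph V E}
    (h : G.IsPattern) : (G.restrict {v | G.ty v ≠ .bang}).IsStringGraph := by
  obtain ⟨⟨hnn, _⟩, ⟨_, hsig⟩, _, _, _⟩ := h
  refine ⟨⟨fun e he => hnn e.1 he, fun v => v.2⟩, fun v hv => ⟨?_, ?_⟩⟩
  · intro e₁ e₂ h1 h2
    exact Subtype.ext ((hsig v.1 hv).1 e₁.1 e₂.1 ⟨e₁.2.1, e₁.2.2⟩ ⟨e₂.2.1, e₂.2.2⟩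
      (congrArg Subtype.val h1) (congrArg Subtype.val h2))
  · intro e₁ e₂ h1 h2
    exact Subtype.ext ((hsig v.1 hv).2 e₁.1 e₂.1 ⟨e₁.2.1, e₁.2.2⟩ ⟨e₂.2.1, e₂.2.2⟩
      (congrArg Subtype.val h1) (congrArg Subtype.val h2))

/-- The category `SGraph` of string graphs. -/
structure SGCat : Type 1 where
  V : Type
  E : Type
  G : TGraph V E
  str : G.IsStringGraph

/-- The category `SPatGraph` of pattern graphs. -/
structure PGCat : Type 1 where
  V : Type
  E : Type
  G : TGraph V E
  pat : G.IsPattern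

instance : Category SGCat where
  Hom A B := TGraph.GHom A.G B.G
  id A := TGraph.GHom.id A.G
  comp f g := g.comp f
  id_comp _ := rfl
  comp_id _ := rfl
  assoc _ _ _ := rfl

instance : Category PGCat where
  Hom A B := TGraph.GHom A.G B.G
  id A := TGraph.GHom.id A.G
  comp f g := g.comp f
  id_comp _ := rfl
  comp_id _ := rfl
  assoc _ _ _ := rfl

/-- The morphism of string graphs obtained by restricting a pattern-graph
morphism to the non-`!`-vertices. -/
def restrictBangHom {V E V' E' : Type} {G : TGraph V E} {H : TGraph V' E'}
    (f : TGraph.GHom G H) :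
    TGraph.GHom (G.restrict {v | G.ty v ≠ .bang}) (H.restrict {v | H.ty v ≠ .bang}) where
  fv v := ⟨f.fv v.1, show H.ty (f.fv v.1) ≠ .bang from by rw [f.map_ty]; exact v.2⟩
  fe e := ⟨f.fe e.1,
    ⟨show H.ty (H.s (f.fe e.1)) ≠ .bang from by rw [f.map_s, f.map_ty]; exact e.2.1,
     show H.ty (H.t (f.fe e.1)) ≠ .bang from by rw [f.map_t, f.map_ty]; exact e.2.2⟩⟩
  map_s e := Subtype.ext (f.map_s e.1)
  map_t e := Subtype.ext (f.map_t e.1)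
  map_ty v := f.map_ty v.1

/-- The embedding `E : SGraph ↪ SPatGraph`, regarding a string graph as a
pattern graph with no `!`-vertices. -/
def EFunc : SGCat ⥤ PGCat where
  obj A := ⟨A.V, A.E, A.G, TGraph.isPattern_of_isStringGraph A.str⟩
  map f := f
  map_id _ := rfl
  map_comp _ _ := rfl

/-- The forgetful functor `U : SPatGraph → SGraph` deleting all `!`-vertices
and the edges incident to them. -/
def UFunc : PGCat ⥤ SGCat where
  obj A := ⟨_, _, A.G.restrict {v | A.G.ty v ≠ .bang},
    TGraph.isStringGraph_restrictNonBang A.pat⟩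
  map f := restrictBangHom f
  map_id _ := rfl
  map_comp _ _ := rfl

/-- The embedding `E : SGraph → SPatGraph`, regarding each
string graph as a pattern graph with no `!`-vertices, is full and
coreflective: it is left adjoint to the forgetful functor `U` deleting all
`!`-vertices and their incident edges. -/
theorem TGraph.GHom.ext' {V E V' E' : Type} {G : TGraph V E} {H : TGraph V' E'}
    {f g : TGraph.GHom G H} (hv : f.fv = g.fv) (he : f.fe = g.fe) : f = g := by
  cases f; cases g; simp_all

/-- The unit-side hom-equiv for the adjunction `E ⊣ U`. -/
def adjEquiv (A : SGCat) (P : PGCat) :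
    (EFunc.obj A ⟶ P) ≃ (A ⟶ UFunc.obj P) where
  toFun f :=
    { fv := fun v => ⟨f.fv v, by
        show P.G.ty (f.fv v) ≠ .bang
        exact fun h => A.str.1.2 v ((f.map_ty _).symm.trans h)⟩
      fe := fun e => ⟨f.fe e, by
        constructor
        · show P.G.ty (P.G.s (f.fe e)) ≠ .bang
          exact fun h => A.str.1.2 _ ((f.map_ty _).symm.trans ((congrArg P.G.ty (f.map_s e)).symm.trans h))
        · show P.G.ty (P.G.t (f.fe e)) ≠ .bang
          exact fun h => A.str.1.2 _ ((f.map_ty _).symm.trans ((congrArg P.G.ty (f.map_t e)).symm.trans h))⟩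
      map_s := fun e => Subtype.ext (f.map_s e)
      map_t := fun e => Subtype.ext (f.map_t e)
      map_ty := fun v => f.map_ty v }
  invFun g :=
    { fv := fun v => (g.fv v).1
      fe := fun e => (g.fe e).1
      map_s := fun e => congrArg Subtype.val (g.map_s e)
      map_t := fun e => congrArg Subtype.val (g.map_t e)
      map_ty := fun v => g.map_ty v }
  left_inv f := TGraph.GHom.ext' rfl rfl
  right_inv g := TGraph.GHom.ext' (funext fun v => Subtype.ext rfl)
    (funext fun e => Subtype.ext rfl)

theorem statement_19 : EFunc.Full ∧ Nonempty (EFunc ⊣ UFunc) := by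
  refine ⟨⟨fun {A B} f => ⟨f, rfl⟩⟩, ⟨Adjunction.mkOfHomEquiv
    { homEquiv := adjEquiv
      homEquiv_naturality_left_symm := fun f g => TGraph.GHom.ext' rfl rfl
      homEquiv_naturality_right := fun f g =>
        TGraph.GHom.ext' (funext fun v => Subtype.ext rfl)
          (funext fun e => Subtype.ext rfl) }⟩⟩
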